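/- arXiv:1207.5536 — 2 statements merged into one kernel-verified Lean document; each statement's English description precedes it below -/
import Mathlib

section
/- Let (Ω, P) be a probability space and K ≥ 2 an integer number of arms, indexed by i ∈ {1,…,K}. For each arm i let n_i be a positive integer and let the samples X_{i,1},…,X_{i,n_i} (over all arms i and all indices) be jointly independent random variables with values in [0,1], where each sample of arm i has expectation μ_i. Let arm * be the unique arm maximizing μ_i, write Δ_i = μ_* − μ_i, and let X̄_i = (1/n_i)·Σ_k X_{i,k} denote the sample mean of arm i. Then for any choice of δ_i with 0 < δ_i < Δ_i for each i ≠ *, P( ∃ i ≠ * such that X̄_i ≥ X̄_* ) ≤ Σ_{i ≠ *} [ exp(−2δ_i² n_i) + exp(−2(Δ_i−δ_i)² n_*) ]. -/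
open Real MeasureTheory ProbabilityTheory

lemma hoeffding_aux {p : ℝ} (hp0 : 0 ≤ p) (hp1 : p ≤ 1) (t : ℝ) :
    1 - p + p * exp t ≤ exp (p * t + t ^ 2 / 8) := by
  have gpos : ∀ s : ℝ, 0 < 1 - p + p * exp s := by
    intro s
    nlinarith [exp_pos s, mul_nonneg hp0 (exp_pos s).le]
  set F : ℝ → ℝ := fun s => Real.log (1 - p + p * exp s) - p * s - s ^ 2 / 8 with hFdef
  set φ : ℝ → ℝ := fun s => p * exp s / (1 - p + p * exp s) - p - s / 4 with hφdef
  have hg : ∀ s : ℝ, HasDerivAt (fun s => 1 - p + p * exp s) (p * exp s) s := by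
    intro s
    simpa using ((Real.hasDerivAt_exp s).const_mul p).const_add (1 - p)
  have hF : ∀ s : ℝ, HasDerivAt F (φ s) s := by
    intro s
    have h1 : HasDerivAt (fun s => Real.log (1 - p + p * exp s))
        (p * exp s / (1 - p + p * exp s)) s := (hg s).log (gpos s).ne'
    have h2 : HasDerivAt (fun s : ℝ => p * s) p s := by simpa using (hasDerivAt_id s).const_mul p
    have h3 : HasDerivAt (fun s : ℝ => s ^ 2 / 8) (s / 4) s := by
      have h := (hasDerivAt_pow 2 s).div_const 8
      exact h.congr_deriv (by norm_num; ring)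
    exact (h1.sub h2).sub h3
  have hφ' : ∀ s : ℝ, HasDerivAt φ
      (p * exp s * (1 - p) / (1 - p + p * exp s) ^ 2 - 1 / 4) s := by
    intro s
    have h1 : HasDerivAt (fun s => p * exp s / (1 - p + p * exp s))
        ((p * exp s * (1 - p + p * exp s) - p * exp s * (p * exp s)) /
          (1 - p + p * exp s) ^ 2) s :=
      ((Real.hasDerivAt_exp s).const_mul p).div (hg s) (gpos s).ne'
    have h2 : HasDerivAt (fun s : ℝ => p + s / 4) (1 / 4) s := by
      simpa using ((hasDerivAt_id s).div_const 4).const_add p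
    have := h1.sub h2
    have hfun : φ = (fun s => p * exp s / (1 - p + p * exp s)) - fun s => p + s / 4 := by
      ext u; simp [hφdef]; ring
    rw [hfun]
    exact this.congr_deriv (g' := p * exp s * (1 - p) / (1 - p + p * exp s) ^ 2 - 1 / 4) (by ring)
  have hφanti : Antitone φ := by
    apply antitone_of_deriv_nonpos
    · exact fun s => (hφ' s).differentiableAt
    · intro s
      rw [(hφ' s).deriv]
      have h4 : 4 * (p * exp s * (1 - p)) ≤ (1 - p + p * exp s) ^ 2 := by
        nlinarith [sq_nonneg (1 - p - p * exp s)]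
      have := gpos s
      rw [sub_nonpos, div_le_div_iff₀ (by positivity) (by norm_num)]
      nlinarith
  have hφ0 : φ 0 = 0 := by simp [hφdef]
  have hF0 : F 0 = 0 := by simp [hFdef]
  have key : ∀ s : ℝ, F s ≤ 0 := by
    intro s
    rcases le_or_gt 0 s with hs | hs
    · have hanti : AntitoneOn F (Set.Ici 0) := by
        apply antitoneOn_of_deriv_nonpos (convex_Ici 0)
        · exact fun x _ => (hF x).differentiableAt.continuousAt.continuousWithinAt
        · intro x hx
          exact (hF x).differentiableAt.differentiableWithinAt
        · intro x hx
          rw [(hF x).deriv]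
          have : φ x ≤ φ 0 := hφanti (le_of_lt (by simpa using hx))
          simpa [hφ0] using this
      have := hanti (Set.self_mem_Ici) hs hs
      simpa [hF0] using this
    · have hmono : MonotoneOn F (Set.Iic 0) := by
        apply monotoneOn_of_deriv_nonneg (convex_Iic 0)
        · exact fun x _ => (hF x).differentiableAt.continuousAt.continuousWithinAt
        · intro x hx
          exact (hF x).differentiableAt.differentiableWithinAt
        · intro x hx
          rw [(hF x).deriv]
          have : φ 0 ≤ φ x := hφanti (le_of_lt (by simpa using hx))
          simpa [hφ0] using this
      have := hmono (le_of_lt hs) (Set.self_mem_Iic) (le_of_lt hs)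
      simpa [hF0] using this
  have := key t
  have hlog : Real.log (1 - p + p * exp t) ≤ p * t + t ^ 2 / 8 := by
    simp only [hFdef] at this; linarith
  calc 1 - p + p * exp t = exp (Real.log (1 - p + p * exp t)) := (exp_log (gpos t)).symm
    _ ≤ exp (p * t + t ^ 2 / 8) := exp_le_exp.2 hlog

lemma integrable_of_bdd {Ω : Type*} [MeasurableSpace Ω] {P : Measure Ω}
    [IsProbabilityMeasure P] {Y : Ω → ℝ} (hY : Measurable Y) {C : ℝ}
    (hC : ∀ ω, |Y ω| ≤ C) : Integrable Y P :=
  (integrable_const C).mono' hY.aestronglyMeasurable (ae_of_all _ hC)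

lemma mgf_centered_le {Ω : Type*} [MeasurableSpace Ω] (P : Measure Ω)
    [IsProbabilityMeasure P] {Y : Ω → ℝ} (hY : Measurable Y)
    (h01 : ∀ ω, Y ω ∈ Set.Icc (0 : ℝ) 1) {m : ℝ} (hm : ∫ ω, Y ω ∂P = m) (t : ℝ) :
    mgf (fun ω => Y ω - m) P t ≤ exp (t ^ 2 / 8) := by
  have hYint : Integrable Y P :=
    integrable_of_bdd hY (fun ω => abs_le.2 ⟨by linarith [(h01 ω).1], (h01 ω).2⟩)
  have hm0 : 0 ≤ m := hm ▸ integral_nonneg (fun ω => (h01 ω).1)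
  have hm1 : m ≤ 1 := by
    rw [← hm]
    calc ∫ ω, Y ω ∂P ≤ ∫ _, (1 : ℝ) ∂P := integral_mono hYint (integrable_const 1)
          (fun ω => (h01 ω).2)
      _ = 1 := by simp
  have hexp_int : Integrable (fun ω => exp (t * Y ω)) P := by
    apply integrable_of_bdd ((hY.const_mul t).exp)
    · intro ω
      rw [abs_of_pos (exp_pos _)]
      refine le_trans (exp_le_exp.2 ?_) (le_refl (exp |t|))
      calc t * Y ω ≤ |t * Y ω| := le_abs_self _
        _ = |t| * |Y ω| := abs_mul _ _
        _ ≤ |t| * 1 := by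
            refine mul_le_mul_of_nonneg_left ?_ (abs_nonneg t)
            exact abs_le.2 ⟨by linarith [(h01 ω).1], (h01 ω).2⟩
        _ = |t| := mul_one _
  have step1 : mgf (fun ω => Y ω - m) P t = exp (-(t * m)) * ∫ ω, exp (t * Y ω) ∂P := by
    rw [mgf, ← integral_const_mul]
    congr 1; ext ω
    rw [← Real.exp_add]; ring_nf
  have step2 : ∫ ω, exp (t * Y ω) ∂P ≤ 1 - m + m * exp t := by
    have hpt : ∀ ω, exp (t * Y ω) ≤ 1 - Y ω + Y ω * exp t := by
      intro ω
      have h := convexOn_exp.2 (Set.mem_univ (0 : ℝ)) (Set.mem_univ t)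
        (by linarith [(h01 ω).2] : (0:ℝ) ≤ 1 - Y ω) (h01 ω).1 (by ring)
      simpa [smul_eq_mul, mul_comm] using h
    calc ∫ ω, exp (t * Y ω) ∂P ≤ ∫ ω, (1 - Y ω + Y ω * exp t) ∂P := by
          refine integral_mono hexp_int ?_ hpt
          exact ((integrable_const 1).sub hYint).add (hYint.mul_const _)
      _ = ∫ ω, (1 + (exp t - 1) * Y ω) ∂P := by congr 1; ext ω; ring
      _ = 1 + (exp t - 1) * m := by
          rw [integral_add (integrable_const 1) (hYint.const_mul _), integral_const_mul, hm]
          simp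
      _ = 1 - m + m * exp t := by ring
  calc mgf (fun ω => Y ω - m) P t ≤ exp (-(t * m)) * (1 - m + m * exp t) := by
        rw [step1]
        exact mul_le_mul_of_nonneg_left step2 (exp_pos _).le
    _ ≤ exp (-(t * m)) * exp (m * t + t ^ 2 / 8) :=
        mul_le_mul_of_nonneg_left (hoeffding_aux hm0 hm1 t) (exp_pos _).le
    _ = exp (t ^ 2 / 8) := by rw [← Real.exp_add]; ring_nf

lemma iIndepFun.reindex_real {Ω ι κ : Type*} [MeasurableSpace Ω] {P : Measure Ω}
    {f : ι → Ω → ℝ} (u : κ → ι) (hu : Function.Injective u)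
    (h : iIndepFun f P) :
    iIndepFun (fun k => f (u k)) P := by
  classical
  rw [iIndepFun_iff_measure_inter_preimage_eq_mul] at h ⊢
  intro S sets hsets
  set sets' : ι → Set ℝ := fun i =>
    if h' : ∃ k, u k = i then sets h'.choose else Set.univ with hsets'def
  have hkey : ∀ k : κ, sets' (u k) = sets k := by
    intro k
    have h' : ∃ k', u k' = u k := ⟨k, rfl⟩
    rw [hsets'def]
    simp only [dif_pos h']
    exact congrArg sets (hu h'.choose_spec)
  have hmeas' : ∀ i, i ∈ S.map ⟨u, hu⟩ → MeasurableSet (sets' i) := by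
    intro i hi
    rw [Finset.mem_map] at hi
    obtain ⟨k, hk, rfl⟩ := hi
    simp only [Function.Embedding.coeFn_mk]
    rw [hkey k]
    exact hsets k hk
  have := h (S.map ⟨u, hu⟩) hmeas'
  have e1 : ⋂ i ∈ S.map ⟨u, hu⟩, f i ⁻¹' sets' i = ⋂ k ∈ S, f (u k) ⁻¹' sets k := by
    rw [← Finset.set_biInter_coe, Finset.coe_map, Set.biInter_image,
      ← Finset.set_biInter_coe]
    simp only [Function.Embedding.coeFn_mk, hkey]
  have e2 : (∏ i ∈ S.map ⟨u, hu⟩, P (f i ⁻¹' sets' i)) =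
      ∏ k ∈ S, P (f (u k) ⁻¹' sets k) := by
    rw [Finset.prod_map]
    simp only [Function.Embedding.coeFn_mk, hkey]
  rw [e1, e2] at this
  exact this

lemma hoeffding_tail_ge {Ω : Type*} [MeasurableSpace Ω] (P : Measure Ω)
    [IsProbabilityMeasure P] {n : ℕ} (hn : 0 < n) {Y : Fin n → Ω → ℝ}
    (hmY : ∀ k, Measurable (Y k)) (h01 : ∀ k ω, Y k ω ∈ Set.Icc (0 : ℝ) 1)
    {m : ℝ} (hE : ∀ k, ∫ ω, Y k ω ∂P = m)
    (hind : iIndepFun Y P) {δ : ℝ} (hδ : 0 < δ) :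
    P {ω | (n : ℝ) * m + n * δ ≤ ∑ k, Y k ω} ≤ ENNReal.ofReal (exp (-2 * δ ^ 2 * n)) := by
  set Z : Fin n → Ω → ℝ := fun k ω => Y k ω - m with hZdef
  have hmZ : ∀ k, Measurable (Z k) := fun k => (hmY k).sub_const m
  have hindZ : iIndepFun Z P := by
    have := hind.comp (fun _ (x : ℝ) => x - m) (fun _ => measurable_id.sub_const m)
    exact this
  have hZbd : ∀ k ω, |Z k ω| ≤ 1 + |m| := by
    intro k ω
    have h1 := (h01 k ω).1; have h2 := (h01 k ω).2
    rw [hZdef]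
    have : |Y k ω - m| ≤ |Y k ω| + |m| := abs_sub _ _
    have : |Y k ω| ≤ 1 := abs_le.2 ⟨by linarith, h2⟩
    calc |Y k ω - m| ≤ |Y k ω| + |m| := abs_sub _ _
      _ ≤ 1 + |m| := by linarith
  set t : ℝ := 4 * δ with htdef
  have ht : 0 ≤ t := by positivity
  have hZint : ∀ k, Integrable (fun ω => exp (t * Z k ω)) P := by
    intro k
    apply integrable_of_bdd ((hmZ k).const_mul t).exp (C := exp (|t| * (1 + |m|)))
    intro ω
    rw [abs_of_pos (exp_pos _)]
    refine exp_le_exp.2 ?_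
    calc t * Z k ω ≤ |t * Z k ω| := le_abs_self _
      _ = |t| * |Z k ω| := abs_mul _ _
      _ ≤ |t| * (1 + |m|) := by
          exact mul_le_mul_of_nonneg_left (hZbd k ω) (abs_nonneg t)
  have hmgf : ∀ k, mgf (Z k) P t ≤ exp (t ^ 2 / 8) := fun k =>
    mgf_centered_le P (hmY k) (h01 k) (hE k) t
  have hsum_int : Integrable (fun ω => exp (t * (∑ k, Z k) ω)) P :=
    hindZ.integrable_exp_mul_sum hmZ (fun k _ => hZint k)
  have hchern := measure_ge_le_exp_mul_mgf (X := ∑ k, Z k) (μ := P) ((n : ℝ) * δ) ht hsum_int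
  have hmgfsum : mgf (∑ k, Z k) P t ≤ exp (n * (t ^ 2 / 8)) := by
    rw [hindZ.mgf_sum hmZ Finset.univ]
    calc (∏ k, mgf (Z k) P t) ≤ ∏ _k : Fin n, exp (t ^ 2 / 8) :=
          Finset.prod_le_prod (fun k _ => mgf_nonneg) (fun k _ => hmgf k)
      _ = exp (n * (t ^ 2 / 8)) := by
          rw [Finset.prod_const, ← Real.exp_nat_mul]
          simp
  have hev : {ω | (n : ℝ) * m + n * δ ≤ ∑ k, Y k ω} =
      {ω | (n : ℝ) * δ ≤ (∑ k, Z k) ω} := by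
    ext ω
    simp only [Set.mem_setOf_eq, Finset.sum_apply]
    have hsub : ∑ k, Z k ω = (∑ k, Y k ω) - n * m := by
      rw [hZdef]
      rw [Finset.sum_sub_distrib, Finset.sum_const, Finset.card_univ, Fintype.card_fin,
        nsmul_eq_mul]
    rw [hsub]
    constructor <;> intro h <;> linarith
  rw [hev, ENNReal.le_ofReal_iff_toReal_le (measure_ne_top _ _) (exp_pos _).le]
  calc (P {ω | (n : ℝ) * δ ≤ (∑ k, Z k) ω}).toReal
      ≤ exp (-t * ((n : ℝ) * δ)) * mgf (∑ k, Z k) P t := hchern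
    _ ≤ exp (-t * ((n : ℝ) * δ)) * exp (n * (t ^ 2 / 8)) :=
        mul_le_mul_of_nonneg_left hmgfsum (exp_pos _).le
    _ = exp (-2 * δ ^ 2 * n) := by
        rw [← Real.exp_add, htdef]
        ring_nf

lemma hoeffding_tail_le {Ω : Type*} [MeasurableSpace Ω] (P : Measure Ω)
    [IsProbabilityMeasure P] {n : ℕ} (hn : 0 < n) {Y : Fin n → Ω → ℝ}
    (hmY : ∀ k, Measurable (Y k)) (h01 : ∀ k ω, Y k ω ∈ Set.Icc (0 : ℝ) 1)
    {m : ℝ} (hE : ∀ k, ∫ ω, Y k ω ∂P = m)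
    (hind : iIndepFun Y P) {δ : ℝ} (hδ : 0 < δ) :
    P {ω | ∑ k, Y k ω ≤ (n : ℝ) * m - n * δ} ≤ ENNReal.ofReal (exp (-2 * δ ^ 2 * n)) := by
  set W : Fin n → Ω → ℝ := fun k ω => 1 - Y k ω with hWdef
  have hmW : ∀ k, Measurable (W k) := fun k => (measurable_const.sub (hmY k))
  have hindW : iIndepFun W P := by
    have := hind.comp (fun _ (x : ℝ) => 1 - x) (fun _ => measurable_const.sub measurable_id)
    exact this
  have hW01 : ∀ k ω, W k ω ∈ Set.Icc (0 : ℝ) 1 := by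
    intro k ω
    have h1 := (h01 k ω).1; have h2 := (h01 k ω).2
    constructor <;> simp [hWdef] <;> linarith
  have hYint : ∀ k, Integrable (Y k) P := fun k =>
    integrable_of_bdd (hmY k)
      (fun ω => abs_le.2 ⟨by linarith [(h01 k ω).1], (h01 k ω).2⟩)
  have hEW : ∀ k, ∫ ω, W k ω ∂P = 1 - m := by
    intro k
    rw [hWdef]
    rw [integral_sub (integrable_const 1) (hYint k), hE k]
    simp
  have := hoeffding_tail_ge P hn hmW hW01 hEW hindW hδ
  have hev : {ω | (n : ℝ) * (1 - m) + n * δ ≤ ∑ k, W k ω} =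
      {ω | ∑ k, Y k ω ≤ (n : ℝ) * m - n * δ} := by
    ext ω
    simp only [Set.mem_setOf_eq]
    have hsub : ∑ k, W k ω = (n : ℝ) - ∑ k, Y k ω := by
      rw [hWdef]
      rw [Finset.sum_sub_distrib, Finset.sum_const, Finset.card_univ, Fintype.card_fin,
        nsmul_eq_mul, mul_one]
    rw [hsub]
    constructor <;> intro h <;> linarith
  rwa [hev] at this

/-- Misselection bound for a fixed allocation over `K` arms: the probability
that some suboptimal arm's sample mean is at least the optimal arm's sample
mean is bounded via a union bound and the Chernoff–Hoeffding bound, splitting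
each interval `[μ i, μ star]` at `μ i + δ i`. -/
theorem misselection_union_bound
    {Ω : Type*} [MeasurableSpace Ω] (P : Measure Ω) [IsProbabilityMeasure P]
    (K : ℕ) (hK : 2 ≤ K)
    (n : Fin K → ℕ) (hn : ∀ i, 0 < n i)
    (X : (i : Fin K) → Fin (n i) → Ω → ℝ)
    (hmX : ∀ i k, Measurable (X i k))
    (hindep : iIndepFun
      (fun p : Σ i : Fin K, Fin (n i) => X p.1 p.2) P)
    (hX01 : ∀ i k ω, X i k ω ∈ Set.Icc (0 : ℝ) 1)
    (μ : Fin K → ℝ)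
    (hEX : ∀ i k, ∫ ω, X i k ω ∂P = μ i)
    (star : Fin K) (hstar : ∀ i, i ≠ star → μ i < μ star)
    (δ : Fin K → ℝ)
    (hδ : ∀ i, i ≠ star → 0 < δ i ∧ δ i < μ star - μ i) :
    P {ω | ∃ i, i ≠ star ∧
        (1 / (n i) : ℝ) * ∑ k, X i k ω ≥ (1 / (n star) : ℝ) * ∑ k, X star k ω}
      ≤ ENNReal.ofReal
          (∑ i ∈ Finset.univ.filter (· ≠ star),
            (Real.exp (-2 * (δ i) ^ 2 * n i)
              + Real.exp (-2 * (μ star - μ i - δ i) ^ 2 * n star))) := by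
  classical
  have hind_arm : ∀ i : Fin K, iIndepFun (X i) P := by
    intro i
    have hu : Function.Injective (fun k : Fin (n i) => (⟨i, k⟩ : Σ j : Fin K, Fin (n j))) :=
      fun a b h => by simpa using h
    have := iIndepFun.reindex_real
      (fun k : Fin (n i) => (⟨i, k⟩ : Σ j : Fin K, Fin (n j))) hu hindep
    exact this
  set A : Fin K → Set Ω := fun i =>
    {ω | (n i : ℝ) * μ i + (n i : ℝ) * δ i ≤ ∑ k, X i k ω} with hA
  set B : Fin K → Set Ω := fun i =>
    {ω | ∑ k, X star k ω ≤ (n star : ℝ) * μ star - (n star : ℝ) * (μ star - μ i - δ i)}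
    with hB
  have hsubset : {ω | ∃ i, i ≠ star ∧
        (1 / (n i) : ℝ) * ∑ k, X i k ω ≥ (1 / (n star) : ℝ) * ∑ k, X star k ω}
      ⊆ ⋃ i ∈ Finset.univ.filter (· ≠ star), (A i ∪ B i) := by
    rintro ω ⟨i, hi, hge⟩
    have hmem : i ∈ Finset.univ.filter (· ≠ star) := by simp [hi]
    refine Set.mem_biUnion hmem ?_
    have hpi : (0 : ℝ) < (n i : ℝ) := by exact_mod_cast hn i
    have hps : (0 : ℝ) < (n star : ℝ) := by exact_mod_cast hn star
    by_cases hcase : μ i + δ i ≤ (1 / (n i) : ℝ) * ∑ k, X i k ω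
    · left
      have h2 := mul_le_mul_of_nonneg_left hcase hpi.le
      have h3 : (n i : ℝ) * ((1 / (n i) : ℝ) * ∑ k, X i k ω) = ∑ k, X i k ω := by
        field_simp
      rw [h3] at h2
      simp only [hA, Set.mem_setOf_eq]
      linarith
    · right
      push_neg at hcase
      have hb : (1 / (n star) : ℝ) * ∑ k, X star k ω ≤ μ i + δ i :=
        le_of_lt (lt_of_le_of_lt hge hcase)
      have h2 := mul_le_mul_of_nonneg_left hb hps.le
      have h3 : (n star : ℝ) * ((1 / (n star) : ℝ) * ∑ k, X star k ω) =
          ∑ k, X star k ω := by field_simp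
      rw [h3] at h2
      simp only [hB, Set.mem_setOf_eq]
      nlinarith
  calc P {ω | ∃ i, i ≠ star ∧
        (1 / (n i) : ℝ) * ∑ k, X i k ω ≥ (1 / (n star) : ℝ) * ∑ k, X star k ω}
      ≤ P (⋃ i ∈ Finset.univ.filter (· ≠ star), (A i ∪ B i)) := measure_mono hsubset
    _ ≤ ∑ i ∈ Finset.univ.filter (· ≠ star), P (A i ∪ B i) :=
        measure_biUnion_finset_le _ _
    _ ≤ ∑ i ∈ Finset.univ.filter (· ≠ star),
          ENNReal.ofReal (Real.exp (-2 * (δ i) ^ 2 * n i)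
            + Real.exp (-2 * (μ star - μ i - δ i) ^ 2 * n star)) := by
        refine Finset.sum_le_sum ?_
        intro i hi
        rw [Finset.mem_filter] at hi
        have hi' : i ≠ star := hi.2
        have hδi := hδ i hi'
        have hPA : P (A i) ≤ ENNReal.ofReal (Real.exp (-2 * (δ i) ^ 2 * n i)) :=
          hoeffding_tail_ge P (hn i) (hmX i) (hX01 i) (hEX i) (hind_arm i) hδi.1
        have hPB : P (B i)
            ≤ ENNReal.ofReal (Real.exp (-2 * (μ star - μ i - δ i) ^ 2 * n star)) :=
          hoeffding_tail_le P (hn star) (hmX star) (hX01 star) (hEX star)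
            (hind_arm star) (by linarith [hδi.2] : 0 < μ star - μ i - δ i)
        calc P (A i ∪ B i) ≤ P (A i) + P (B i) := measure_union_le _ _
          _ ≤ ENNReal.ofReal (Real.exp (-2 * (δ i) ^ 2 * n i))
              + ENNReal.ofReal (Real.exp (-2 * (μ star - μ i - δ i) ^ 2 * n star)) :=
            add_le_add hPA hPB
          _ = ENNReal.ofReal (Real.exp (-2 * (δ i) ^ 2 * n i)
              + Real.exp (-2 * (μ star - μ i - δ i) ^ 2 * n star)) :=
            (ENNReal.ofReal_add (exp_pos _).le (exp_pos _).le).symm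
    _ = ENNReal.ofReal
          (∑ i ∈ Finset.univ.filter (· ≠ star),
            (Real.exp (-2 * (δ i) ^ 2 * n i)
              + Real.exp (-2 * (μ star - μ i - δ i) ^ 2 * n star))) := by
        rw [ENNReal.ofReal_sum_of_nonneg]
        intro i _
        positivity
end

section
/- Let (Ω, P) be a probability space and K ≥ 2 an integer number of arms. Let 0 < ε < 1, and suppose arm * (the unique arm with maximal mean μ_*) is sampled n_* times and every other arm i is sampled n_i times, where n_* ≥ n·ε and n_i ≥ n·(1−ε)/(K−1) for a given positive real n; all samples are jointly independent, take values in [0,1], and each sample of arm i has expectation μ_i. Write Δ_i = μ_* − μ_i and X̄_i for the sample mean of arm i. Let J be any random arm index, measurable with respect to the samples, such that X̄_J = max_i X̄_i (J selects an arm with the greatest sample mean). Then the simple regret satisfies E[μ_* − μ_J] ≤ 2·Σ_{i ≠ *} Δ_i · exp( −2Δ_i² n ε / (1 + √((K−1)ε/(1−ε)))² ). -/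
open MeasureTheory ProbabilityTheory Real

section Aux

lemma D_pos (p t : ℝ) (hp0 : 0 ≤ p) (hp1 : p ≤ 1) : 0 < 1 - p + p * Real.exp t := by
  rcases eq_or_lt_of_le hp0 with h | h
  · simp [← h]
  · have := mul_pos h (exp_pos t); linarith

lemma quad_aux (d x : ℝ) : x * d - x * x ≤ 1 / 4 * d ^ 2 := by
  nlinarith [sq_nonneg (d - 2 * x)]

lemma bern_bound (p t : ℝ) (hp0 : 0 ≤ p) (hp1 : p ≤ 1) :
    1 - p + p * Real.exp t ≤ Real.exp (p * t + t ^ 2 / 8) := by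
  set D : ℝ → ℝ := fun s => 1 - p + p * Real.exp s with hD
  have hDpos : ∀ s, 0 < D s := fun s => D_pos p s hp0 hp1
  set g : ℝ → ℝ := fun s => p + s / 4 - p * Real.exp s / D s with hg
  set φ : ℝ → ℝ := fun s => p * s + s ^ 2 / 8 - Real.log (D s) with hφ
  have hDder : ∀ s, HasDerivAt D (p * Real.exp s) s := by
    intro s
    exact ((Real.hasDerivAt_exp s).const_mul p).const_add (1 - p)
  have hφder : ∀ s, HasDerivAt φ (g s) s := by
    intro s
    have h1 : HasDerivAt (fun s : ℝ => p * s) p s := by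
      simpa using (hasDerivAt_id s).const_mul p
    have h2 : HasDerivAt (fun s : ℝ => s ^ 2 / 8) (s / 4) s := by
      have := (hasDerivAt_pow 2 s).div_const 8
      exact this.congr_deriv (by push_cast; ring)
    have h3 : HasDerivAt (fun s => Real.log (D s)) (p * Real.exp s / D s) s :=
      (hDder s).log (hDpos s).ne'
    exact (h1.add h2).sub h3
  have hgder : ∀ s, HasDerivAt g
      (1 / 4 - (p * Real.exp s * D s - p * Real.exp s * (p * Real.exp s)) / (D s) ^ 2) s := by
    intro s
    have h1 : HasDerivAt (fun s : ℝ => p + s / 4) (1 / 4) s := by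
      simpa using ((hasDerivAt_id s).div_const 4).const_add p
    have h2 : HasDerivAt (fun s => p * Real.exp s / D s)
        ((p * Real.exp s * D s - p * Real.exp s * (p * Real.exp s)) / (D s) ^ 2) s :=
      ((Real.hasDerivAt_exp s).const_mul p).div (hDder s) (hDpos s).ne'
    exact h1.sub h2
  have hgderiv_nonneg : ∀ s, 0 ≤
      1 / 4 - (p * Real.exp s * D s - p * Real.exp s * (p * Real.exp s)) / (D s) ^ 2 := by
    intro s
    have hd := hDpos s
    rw [sub_nonneg, div_le_iff₀ (pow_pos hd 2)]
    exact quad_aux (D s) (p * Real.exp s)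
  have hgmono : Monotone g := by
    apply monotone_of_deriv_nonneg (fun s => (hgder s).differentiableAt)
    intro s
    rw [(hgder s).deriv]
    exact hgderiv_nonneg s
  have hg0 : g 0 = 0 := by simp [hg, hD]
  have hφ0 : φ 0 = 0 := by simp [hφ, hD]
  have hφdiff : Differentiable ℝ φ := fun s => (hφder s).differentiableAt
  have key : 0 ≤ φ t := by
    rcases le_or_gt 0 t with ht | ht
    · have hmono : MonotoneOn φ (Set.Ici 0) := by
        apply monotoneOn_of_deriv_nonneg (convex_Ici 0) hφdiff.continuous.continuousOn
          (hφdiff.differentiableOn)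
        intro x hx
        rw [interior_Ici] at hx
        rw [(hφder x).deriv]
        rw [← hg0]
        exact hgmono hx.le
      have := hmono (Set.self_mem_Ici) (Set.mem_Ici.mpr ht) ht
      rwa [hφ0] at this
    · have hanti : AntitoneOn φ (Set.Iic 0) := by
        apply antitoneOn_of_deriv_nonpos (convex_Iic 0) hφdiff.continuous.continuousOn
          (hφdiff.differentiableOn)
        intro x hx
        rw [interior_Iic] at hx
        rw [(hφder x).deriv]
        rw [← hg0]
        exact hgmono hx.le
      have := hanti (Set.mem_Iic.mpr ht.le) (Set.self_mem_Iic) ht.le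
      rwa [hφ0] at this
  have : Real.log (D t) ≤ p * t + t ^ 2 / 8 := by
    have h : 0 ≤ p * t + t ^ 2 / 8 - Real.log (D t) := key
    linarith
  calc D t ≤ Real.exp (Real.log (D t)) := le_of_eq (Real.exp_log (hDpos t)).symm
    _ ≤ Real.exp (p * t + t ^ 2 / 8) := Real.exp_le_exp.mpr this

section Hoeffding
variable {Ω : Type*} [MeasurableSpace Ω] (P : Measure Ω) [IsProbabilityMeasure P]

lemma integrable_exp_mul_of_mem_Icc {Y : Ω → ℝ} (hm : Measurable Y)
    (h01 : ∀ ω, Y ω ∈ Set.Icc (0 : ℝ) 1) (t : ℝ) :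
    Integrable (fun ω => Real.exp (t * Y ω)) P := by
  refine Integrable.mono' (integrable_const (Real.exp |t|))
    ((hm.const_mul t).exp.aestronglyMeasurable) (ae_of_all _ fun ω => ?_)
  rw [Real.norm_eq_abs, abs_of_pos (exp_pos _), Real.exp_le_exp]
  calc t * Y ω ≤ |t * Y ω| := le_abs_self _
    _ = |t| * |Y ω| := abs_mul _ _
    _ ≤ |t| * 1 := by
        refine mul_le_mul_of_nonneg_left ?_ (abs_nonneg t)
        rw [abs_of_nonneg (h01 ω).1]; exact (h01 ω).2
    _ = |t| := mul_one _

lemma integrable_of_mem_Icc {Y : Ω → ℝ} (hm : Measurable Y)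
    (h01 : ∀ ω, Y ω ∈ Set.Icc (0 : ℝ) 1) : Integrable Y P := by
  refine Integrable.mono' (integrable_const 1) hm.aestronglyMeasurable (ae_of_all _ fun ω => ?_)
  rw [Real.norm_eq_abs, abs_of_nonneg (h01 ω).1]; exact (h01 ω).2

lemma hoeffding_mgf {Y : Ω → ℝ} (hm : Measurable Y)
    (h01 : ∀ ω, Y ω ∈ Set.Icc (0 : ℝ) 1) (t : ℝ) :
    mgf Y P t ≤ Real.exp ((∫ ω, Y ω ∂P) * t + t ^ 2 / 8) := by
  set p : ℝ := ∫ ω, Y ω ∂P with hp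
  have hYint : Integrable Y P := integrable_of_mem_Icc P hm h01
  have hp0 : 0 ≤ p := integral_nonneg fun ω => (h01 ω).1
  have hp1 : p ≤ 1 := by
    calc p ≤ ∫ _, (1 : ℝ) ∂P := integral_mono hYint (integrable_const 1) fun ω => (h01 ω).2
      _ = 1 := by simp
  have hpt : ∀ ω, Real.exp (t * Y ω) ≤ 1 - Y ω + Y ω * Real.exp t := by
    intro ω
    have hc := convexOn_exp.2 (Set.mem_univ (0 : ℝ)) (Set.mem_univ t)
      (by linarith [(h01 ω).2] : (0:ℝ) ≤ 1 - Y ω) (h01 ω).1 (by ring)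
    simpa [smul_eq_mul, mul_comm] using hc
  calc mgf Y P t = ∫ ω, Real.exp (t * Y ω) ∂P := rfl
    _ ≤ ∫ ω, (1 - Y ω + Y ω * Real.exp t) ∂P := by
        refine integral_mono (integrable_exp_mul_of_mem_Icc P hm h01 t) ?_ hpt
        exact ((integrable_const 1).sub hYint).add (hYint.mul_const _)
    _ = 1 - p + p * Real.exp t := by
        have h1 : Integrable (fun ω => 1 - Y ω) P := (integrable_const 1).sub hYint
        have h2 : Integrable (fun ω => Y ω * Real.exp t) P := hYint.mul_const _
        rw [integral_add h1 h2, integral_sub (integrable_const 1) hYint, integral_mul_const]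
        simp [hp]
    _ ≤ Real.exp (p * t + t ^ 2 / 8) := bern_bound p t hp0 hp1

variable {m : ℕ} {X : Fin m → Ω → ℝ}

lemma chernoff_sum_upper (hm : ∀ k, Measurable (X k))
    (hX01 : ∀ k ω, X k ω ∈ Set.Icc (0 : ℝ) 1)
    (hindep : iIndepFun X P)
    {μ0 : ℝ} (hmean : ∀ k, ∫ ω, X k ω ∂P = μ0)
    {δ : ℝ} (hδ : 0 ≤ δ) :
    (P {ω | (m : ℝ) * (μ0 + δ) ≤ ∑ k, X k ω}).toReal ≤ Real.exp (-2 * m * δ ^ 2) := by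
  have hSint : Integrable (fun ω => Real.exp ((4 * δ) * (∑ k, X k ω))) P := by
    simpa using hindep.integrable_exp_mul_sum hm
      (fun k _ => integrable_exp_mul_of_mem_Icc P (hm k) (hX01 k) (4 * δ)) (s := Finset.univ)
  have hb := measure_ge_le_exp_mul_mgf (X := fun ω => ∑ k, X k ω) (μ := P)
    ((m : ℝ) * (μ0 + δ)) (by positivity : (0:ℝ) ≤ 4 * δ) hSint
  have hmgf : mgf (fun ω => ∑ k, X k ω) P (4 * δ) ≤
      Real.exp ((m : ℝ) * (μ0 * (4 * δ) + (4 * δ) ^ 2 / 8)) := by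
    have hsum : mgf (∑ k, X k) P (4 * δ) = ∏ k, mgf (X k) P (4 * δ) :=
      hindep.mgf_sum hm Finset.univ
    have : mgf (fun ω => ∑ k, X k ω) P (4 * δ) = ∏ k, mgf (X k) P (4 * δ) := by
      rw [← hsum]; congr 1; ext ω; simp
    rw [this]
    calc ∏ k, mgf (X k) P (4 * δ)
        ≤ ∏ (_ : Fin m), Real.exp (μ0 * (4 * δ) + (4 * δ) ^ 2 / 8) := by
          refine Finset.prod_le_prod (fun k _ => mgf_nonneg) fun k _ => ?_
          have := hoeffding_mgf P (hm k) (hX01 k) (4 * δ)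
          rwa [hmean k] at this
      _ = Real.exp ((m : ℝ) * (μ0 * (4 * δ) + (4 * δ) ^ 2 / 8)) := by
          rw [Finset.prod_const, ← Real.exp_nat_mul]; simp
  calc (P {ω | (m : ℝ) * (μ0 + δ) ≤ ∑ k, X k ω}).toReal
      ≤ Real.exp (-(4 * δ) * ((m : ℝ) * (μ0 + δ))) * mgf (fun ω => ∑ k, X k ω) P (4 * δ) := hb
    _ ≤ Real.exp (-(4 * δ) * ((m : ℝ) * (μ0 + δ))) *
        Real.exp ((m : ℝ) * (μ0 * (4 * δ) + (4 * δ) ^ 2 / 8)) := by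
        exact mul_le_mul_of_nonneg_left hmgf (exp_pos _).le
    _ = Real.exp (-2 * m * δ ^ 2) := by rw [← Real.exp_add]; congr 1; ring

lemma chernoff_sum_lower (hm : ∀ k, Measurable (X k))
    (hX01 : ∀ k ω, X k ω ∈ Set.Icc (0 : ℝ) 1)
    (hindep : iIndepFun X P)
    {μ0 : ℝ} (hmean : ∀ k, ∫ ω, X k ω ∂P = μ0)
    {δ : ℝ} (hδ : 0 ≤ δ) :
    (P {ω | ∑ k, X k ω ≤ (m : ℝ) * (μ0 - δ)}).toReal ≤ Real.exp (-2 * m * δ ^ 2) := by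
  have hSint : Integrable (fun ω => Real.exp ((-(4 * δ)) * (∑ k, X k ω))) P := by
    simpa using hindep.integrable_exp_mul_sum hm
      (fun k _ => integrable_exp_mul_of_mem_Icc P (hm k) (hX01 k) (-(4 * δ))) (s := Finset.univ)
  have hb := measure_le_le_exp_mul_mgf (X := fun ω => ∑ k, X k ω) (μ := P)
    ((m : ℝ) * (μ0 - δ)) (by simp; positivity : -(4 * δ) ≤ 0) hSint
  have hmgf : mgf (fun ω => ∑ k, X k ω) P (-(4 * δ)) ≤
      Real.exp ((m : ℝ) * (μ0 * (-(4 * δ)) + (-(4 * δ)) ^ 2 / 8)) := by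
    have hsum : mgf (∑ k, X k) P (-(4 * δ)) = ∏ k, mgf (X k) P (-(4 * δ)) :=
      hindep.mgf_sum hm Finset.univ
    have : mgf (fun ω => ∑ k, X k ω) P (-(4 * δ)) = ∏ k, mgf (X k) P (-(4 * δ)) := by
      rw [← hsum]; congr 1; ext ω; simp
    rw [this]
    calc ∏ k, mgf (X k) P (-(4 * δ))
        ≤ ∏ (_ : Fin m), Real.exp (μ0 * (-(4 * δ)) + (-(4 * δ)) ^ 2 / 8) := by
          refine Finset.prod_le_prod (fun k _ => mgf_nonneg) fun k _ => ?_
          have := hoeffding_mgf P (hm k) (hX01 k) (-(4 * δ))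
          rwa [hmean k] at this
      _ = Real.exp ((m : ℝ) * (μ0 * (-(4 * δ)) + (-(4 * δ)) ^ 2 / 8)) := by
          rw [Finset.prod_const, ← Real.exp_nat_mul]; simp
  calc (P {ω | ∑ k, X k ω ≤ (m : ℝ) * (μ0 - δ)}).toReal
      ≤ Real.exp (-(-(4 * δ)) * ((m : ℝ) * (μ0 - δ))) * mgf (fun ω => ∑ k, X k ω) P (-(4 * δ)) := hb
    _ ≤ Real.exp (-(-(4 * δ)) * ((m : ℝ) * (μ0 - δ))) *
        Real.exp ((m : ℝ) * (μ0 * (-(4 * δ)) + (-(4 * δ)) ^ 2 / 8)) := by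
        exact mul_le_mul_of_nonneg_left hmgf (exp_pos _).le
    _ = Real.exp (-2 * m * δ ^ 2) := by rw [← Real.exp_add]; congr 1; ring

end Hoeffding


lemma iIndepFun_precomp {ι κ Ω : Type*} {β : ι → Type*} {m : ∀ i, MeasurableSpace (β i)}
    [MeasurableSpace Ω] {μ : Measure Ω} {f : ∀ i, Ω → β i}
    (h : iIndepFun (m := m) f μ) (g : κ → ι) (hg : Function.Injective g) :
    iIndepFun (m := fun k => m (g k)) (fun k => f (g k)) μ := by
  classical
  rw [iIndepFun_iff] at h ⊢
  intro s f' H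
  set F : ι → Set Ω := fun i => ⋂ k ∈ s.filter (fun k => g k = i), f' k with hF
  have hfib : ∀ k ∈ s, s.filter (fun k' => g k' = g k) = {k} := by
    intro k hk
    ext k'
    simp only [Finset.mem_filter, Finset.mem_singleton]
    constructor
    · rintro ⟨_, h'⟩; exact hg h'
    · rintro rfl; exact ⟨hk, rfl⟩
  have hFg : ∀ k ∈ s, F (g k) = f' k := by
    intro k hk
    rw [hF]
    simp only
    rw [hfib k hk]
    simp
  have H' : ∀ i ∈ s.image g, MeasurableSet[(m i).comap (f i)] (F i) := by
    intro i hi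
    obtain ⟨k, hk, rfl⟩ := Finset.mem_image.mp hi
    rw [hFg k hk]
    exact H k hk
  have key := h (s.image g) H'
  have hInter : (⋂ i ∈ s.image g, F i) = ⋂ k ∈ s, f' k := by
    rw [Finset.set_biInter_finset_image]
    exact Set.iInter₂_congr hFg
  have hProd : (∏ i ∈ s.image g, μ (F i)) = ∏ k ∈ s, μ (f' k) := by
    rw [Finset.prod_image (fun a ha b hb hab => hg hab)]
    exact Finset.prod_congr rfl fun k hk => by rw [hFg k hk]
  rw [hInter, hProd] at key
  exact key

end Aux

/-- Fixed-allocation form of the simple-regret bound for ε-greedy sampling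
(Theorem 1 of the paper): if the best arm receives at least `n * ε` samples and
every other arm at least `n * (1 - ε) / (K - 1)` samples, then the expected
simple regret of selecting an arm with the greatest sample mean is at most
`2 ∑_{i ≠ *} Δ_i exp (-2 Δ_i² n ε / (1 + √((K-1)ε/(1-ε)))²)`. -/
theorem simple_regret_eps_greedy_bound
    {Ω : Type*} [MeasurableSpace Ω] (P : Measure Ω) [IsProbabilityMeasure P]
    (K : ℕ) (hK : 2 ≤ K)
    (ε : ℝ) (hε0 : 0 < ε) (hε1 : ε < 1)
    (n : ℝ) (hn : 0 < n)
    (nsamp : Fin K → ℕ) (hnsamp : ∀ i, 0 < nsamp i)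
    (X : (i : Fin K) → Fin (nsamp i) → Ω → ℝ)
    (hmX : ∀ i k, Measurable (X i k))
    (hindep : iIndepFun
      (fun p : Σ i : Fin K, Fin (nsamp i) => X p.1 p.2) P)
    (hX01 : ∀ i k ω, X i k ω ∈ Set.Icc (0 : ℝ) 1)
    (μ : Fin K → ℝ)
    (hEX : ∀ i k, ∫ ω, X i k ω ∂P = μ i)
    (star : Fin K) (hstar : ∀ i, i ≠ star → μ i < μ star)
    (hnstar : (nsamp star : ℝ) ≥ n * ε)
    (hni : ∀ i, i ≠ star → (nsamp i : ℝ) ≥ n * (1 - ε) / (K - 1))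
    (J : Ω → Fin K) (hJmeas : Measurable J)
    (hJ : ∀ ω i, (1 / (nsamp i) : ℝ) * ∑ k, X i k ω
        ≤ (1 / (nsamp (J ω)) : ℝ) * ∑ k, X (J ω) k ω) :
    ∫ ω, (μ star - μ (J ω)) ∂P
      ≤ 2 * ∑ i ∈ Finset.univ.filter (· ≠ star),
          (μ star - μ i) *
            Real.exp (-2 * (μ star - μ i) ^ 2 * n * ε
              / (1 + Real.sqrt ((K - 1) * ε / (1 - ε))) ^ 2) := by
  classical
  set r : ℝ := Real.sqrt ((K - 1) * ε / (1 - ε)) with hr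
  have hK1 : (1 : ℝ) ≤ (K : ℝ) - 1 := by
    have : (2 : ℝ) ≤ (K : ℝ) := by exact_mod_cast hK
    linarith
  have hε1' : 0 < 1 - ε := by linarith
  have hr0 : 0 ≤ r := Real.sqrt_nonneg _
  have hrsq : r ^ 2 = ((K : ℝ) - 1) * ε / (1 - ε) := by
    rw [hr, sq_sqrt]
    positivity
  have h1r : (0 : ℝ) < 1 + r := by linarith
  -- per-arm independence
  have harm_indep : ∀ i : Fin K, iIndepFun (fun k => X i k) P := by
    intro i
    exact iIndepFun_precomp hindep (Sigma.mk i) sigma_mk_injective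
  -- probability of picking arm i bounded
  have hkey : ∀ i : Fin K, i ≠ star →
      (P (J ⁻¹' {i})).toReal ≤ 2 * Real.exp (-2 * (μ star - μ i) ^ 2 * n * ε / (1 + r) ^ 2) := by
    intro i hi
    set Δ : ℝ := μ star - μ i with hΔdef
    have hΔ : 0 < Δ := sub_pos.mpr (hstar i hi)
    set δ : ℝ := Δ * r / (1 + r) with hδdef
    set η : ℝ := Δ / (1 + r) with hηdef
    have hδ0 : 0 ≤ δ := by positivity
    have hη0 : 0 ≤ η := by positivity
    have hsplit : μ i + δ = μ star - η := by
      rw [hδdef, hηdef]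
      field_simp
      ring
    set A : Set Ω := {ω | (nsamp i : ℝ) * (μ i + δ) ≤ ∑ k, X i k ω} with hA
    set B : Set Ω := {ω | ∑ k, X star k ω ≤ (nsamp star : ℝ) * (μ star - η)} with hB
    have hsub : J ⁻¹' {i} ⊆ A ∪ B := by
      intro ω hω
      have hJω : J ω = i := hω
      by_contra hc
      rw [Set.mem_union] at hc
      push_neg at hc
      obtain ⟨hcA, hcB⟩ := hc
      rw [hA, Set.mem_setOf_eq, not_le] at hcA
      rw [hB, Set.mem_setOf_eq, not_le] at hcB
      have hmi : (0 : ℝ) < (nsamp i : ℝ) := by exact_mod_cast hnsamp i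
      have hms : (0 : ℝ) < (nsamp star : ℝ) := by exact_mod_cast hnsamp star
      have h1 : (1 / (nsamp i) : ℝ) * ∑ k, X i k ω < μ i + δ := by
        rw [one_div, inv_mul_lt_iff₀ hmi]
        linarith [hcA]
      have h2 : μ star - η < (1 / (nsamp star) : ℝ) * ∑ k, X star k ω := by
        rw [one_div, lt_inv_mul_iff₀ hms]
        linarith [hcB]
      have h3 := hJ ω star
      rw [hJω] at h3
      rw [hsplit] at h1
      linarith
    have hmeas_toReal : (P (J ⁻¹' {i})).toReal ≤ (P A).toReal + (P B).toReal := by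
      have h : P (J ⁻¹' {i}) ≤ P A + P B := (measure_mono hsub).trans (measure_union_le A B)
      have h2 := ENNReal.toReal_mono
        (by exact ENNReal.add_ne_top.mpr ⟨measure_ne_top P A, measure_ne_top P B⟩) h
      rwa [ENNReal.toReal_add (measure_ne_top P A) (measure_ne_top P B)] at h2
    -- Chernoff for arm i
    have hcherA : (P A).toReal ≤ Real.exp (-2 * (nsamp i : ℝ) * δ ^ 2) :=
      chernoff_sum_upper P (hmX i) (hX01 i) (harm_indep i) (hEX i) hδ0
    have hcherB : (P B).toReal ≤ Real.exp (-2 * (nsamp star : ℝ) * η ^ 2) :=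
      chernoff_sum_lower P (hmX star) (hX01 star) (harm_indep star) (hEX star) hη0
    -- exponent comparisons
    have hEi : -2 * (nsamp i : ℝ) * δ ^ 2 ≤ -2 * Δ ^ 2 * n * ε / (1 + r) ^ 2 := by
      have hδsq : δ ^ 2 = Δ ^ 2 * r ^ 2 / (1 + r) ^ 2 := by
        rw [hδdef, div_pow, mul_pow]
      have hmi := hni i hi
      have hc0 : 0 ≤ Δ ^ 2 * r ^ 2 / (1 + r) ^ 2 := by positivity
      have hstep : (n * (1 - ε) / ((K : ℝ) - 1)) * (Δ ^ 2 * r ^ 2 / (1 + r) ^ 2)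
          ≤ (nsamp i : ℝ) * δ ^ 2 := by
        rw [hδsq]
        exact mul_le_mul_of_nonneg_right hmi hc0
      have heq : (n * (1 - ε) / ((K : ℝ) - 1)) * (Δ ^ 2 * r ^ 2 / (1 + r) ^ 2)
          = Δ ^ 2 * n * ε / (1 + r) ^ 2 := by
        rw [hrsq]
        have hKne : ((K : ℝ) - 1) ≠ 0 := by linarith
        have hεne : (1 - ε) ≠ 0 := by linarith
        have hrne : (1 + r) ≠ 0 := h1r.ne'
        field_simp
      rw [heq] at hstep
      have h2 : -(2 : ℝ) * ((nsamp i : ℝ) * δ ^ 2) ≤ -2 * (Δ ^ 2 * n * ε / (1 + r) ^ 2) := by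
        linarith
      calc -2 * (nsamp i : ℝ) * δ ^ 2 = -2 * ((nsamp i : ℝ) * δ ^ 2) := by ring
        _ ≤ -2 * (Δ ^ 2 * n * ε / (1 + r) ^ 2) := h2
        _ = -2 * Δ ^ 2 * n * ε / (1 + r) ^ 2 := by ring
    have hEs : -2 * (nsamp star : ℝ) * η ^ 2 ≤ -2 * Δ ^ 2 * n * ε / (1 + r) ^ 2 := by
      have hηsq : η ^ 2 = Δ ^ 2 / (1 + r) ^ 2 := by
        rw [hηdef, div_pow]
      have hc0 : 0 ≤ Δ ^ 2 / (1 + r) ^ 2 := by positivity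
      have hstep : (n * ε) * (Δ ^ 2 / (1 + r) ^ 2) ≤ (nsamp star : ℝ) * η ^ 2 := by
        rw [hηsq]
        exact mul_le_mul_of_nonneg_right hnstar hc0
      have heq : (n * ε) * (Δ ^ 2 / (1 + r) ^ 2) = Δ ^ 2 * n * ε / (1 + r) ^ 2 := by ring
      rw [heq] at hstep
      have h2 : -(2 : ℝ) * ((nsamp star : ℝ) * η ^ 2) ≤ -2 * (Δ ^ 2 * n * ε / (1 + r) ^ 2) := by
        linarith
      calc -2 * (nsamp star : ℝ) * η ^ 2 = -2 * ((nsamp star : ℝ) * η ^ 2) := by ring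
        _ ≤ -2 * (Δ ^ 2 * n * ε / (1 + r) ^ 2) := h2
        _ = -2 * Δ ^ 2 * n * ε / (1 + r) ^ 2 := by ring
    calc (P (J ⁻¹' {i})).toReal ≤ (P A).toReal + (P B).toReal := hmeas_toReal
      _ ≤ Real.exp (-2 * (nsamp i : ℝ) * δ ^ 2) + Real.exp (-2 * (nsamp star : ℝ) * η ^ 2) :=
          add_le_add hcherA hcherB
      _ ≤ Real.exp (-2 * Δ ^ 2 * n * ε / (1 + r) ^ 2)
          + Real.exp (-2 * Δ ^ 2 * n * ε / (1 + r) ^ 2) :=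
          add_le_add (Real.exp_le_exp.mpr hEi) (Real.exp_le_exp.mpr hEs)
      _ = 2 * Real.exp (-2 * Δ ^ 2 * n * ε / (1 + r) ^ 2) := by ring
  -- integral decomposition
  have hrep : ∀ ω, μ star - μ (J ω)
      = ∑ j, Set.indicator (J ⁻¹' {j}) (fun _ => μ star - μ j) ω := by
    intro ω
    rw [Finset.sum_eq_single_of_mem (J ω) (Finset.mem_univ _)]
    · rw [Set.indicator_of_mem (by simp : ω ∈ J ⁻¹' {J ω})]
    · intro j _ hj
      exact Set.indicator_of_notMem (by simp [Ne.symm hj]) _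
  have hint_eq : ∫ ω, (μ star - μ (J ω)) ∂P
      = ∑ j, (μ star - μ j) * (P (J ⁻¹' {j})).toReal := by
    rw [show (fun ω => μ star - μ (J ω))
        = fun ω => ∑ j, Set.indicator (J ⁻¹' {j}) (fun _ => μ star - μ j) ω from funext hrep]
    rw [integral_finset_sum _ (fun j _ =>
      (integrable_const (μ star - μ j)).indicator (hJmeas (measurableSet_singleton j)))]
    refine Finset.sum_congr rfl fun j _ => ?_
    rw [integral_indicator_const _ (hJmeas (measurableSet_singleton j)), smul_eq_mul, mul_comm]; rfl
  rw [hint_eq]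
  have hdrop : ∑ j, (μ star - μ j) * (P (J ⁻¹' {j})).toReal
      = ∑ j ∈ Finset.univ.filter (· ≠ star), (μ star - μ j) * (P (J ⁻¹' {j})).toReal := by
    rw [Finset.sum_filter_of_ne]
    intro j _ hjne
    intro hj
    apply hjne
    rw [hj]
    simp
  rw [hdrop, Finset.mul_sum]
  refine Finset.sum_le_sum fun j hj => ?_
  have hjne : j ≠ star := (Finset.mem_filter.mp hj).2
  have hΔj : 0 ≤ μ star - μ j := le_of_lt (sub_pos.mpr (hstar j hjne))
  calc (μ star - μ j) * (P (J ⁻¹' {j})).toReal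
      ≤ (μ star - μ j) * (2 * Real.exp (-2 * (μ star - μ j) ^ 2 * n * ε / (1 + r) ^ 2)) :=
        mul_le_mul_of_nonneg_left (hkey j hjne) hΔj
    _ = 2 * ((μ star - μ j) *
        Real.exp (-2 * (μ star - μ j) ^ 2 * n * ε / (1 + r) ^ 2)) := by ring
end
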